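/- Let m_2 denote Lebesgue measure (i.e., the fair coin-flipping product measure) on Cantor space squared, R² = 2^ω × 2^ω, and let B ⊆ R² be a Borel set of positive measure. Then there is a positive-measure Borel set A ⊆ R such that for every ε < 1 there is a positive-measure Borel set C ⊆ R with (m_2 ‖ (A × C))(B) > ε. -/

import Mathlib

open MeasureTheory Set Metric Filter
open scoped ENNReal Topology

attribute [local instance] PiNat.metricSpace

theorem meas_cylinder5 (m : Measure (ℕ → Bool))
    (hm : ∀ (s : Finset ℕ) (f : ℕ → Bool),
      m {x | ∀ i ∈ s, x i = f i} = (2⁻¹ : ℝ≥0∞) ^ s.card)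
    (x : ℕ → Bool) (n : ℕ) : m (PiNat.cylinder x n) = 2⁻¹ ^ n := by
  have h := hm (Finset.range n) x
  rw [Finset.card_range] at h
  rw [← h]
  congr 1
  ext y
  simp [PiNat.mem_cylinder_iff, Finset.mem_range]

theorem mem_cyl_iff_dist5 (z x : ℕ → Bool) (n : ℕ) :
    z ∈ PiNat.cylinder x n ↔ dist z x ≤ (1/2:ℝ)^n :=
  PiNat.mem_cylinder_iff_dist_le

theorem closedBall_pow_eq5 (y : ℕ → Bool) (j : ℕ) :
    closedBall y ((1/2 : ℝ)^j) = PiNat.cylinder y j := by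
  ext z
  rw [mem_closedBall, mem_cyl_iff_dist5]

theorem exists_closedBall_eq5 (x : ℕ → Bool) {r : ℝ} (hr : 0 < r) :
    ∃ n : ℕ, closedBall x r = PiNat.cylinder x n ∧ (1/2 : ℝ)^n ≤ r ∧
      ∀ k : ℕ, (1/2 : ℝ)^k ≤ r → n ≤ k := by
  have hex : ∃ n : ℕ, (1/2 : ℝ)^n ≤ r :=
    (exists_pow_lt_of_lt_one hr (by norm_num)).imp fun n h => h.le
  refine ⟨Nat.find hex, ?_, Nat.find_spec hex, fun k hk => Nat.find_min' hex hk⟩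
  ext z
  rw [mem_closedBall]
  constructor
  · intro hz
    rw [mem_cyl_iff_dist5]
    rcases eq_or_ne z x with rfl | hne
    · simp [dist_self]
    · have hd : dist z x = (1/2:ℝ)^(PiNat.firstDiff z x) := PiNat.dist_eq_of_ne hne
      rw [hd] at hz ⊢
      have hle : Nat.find hex ≤ PiNat.firstDiff z x := Nat.find_min' hex hz
      exact pow_le_pow_of_le_one (by norm_num) (by norm_num) hle
  · intro hz
    exact le_trans ((mem_cyl_iff_dist5 z x _).mp hz) (Nat.find_spec hex)

theorem doubling5 (m : Measure (ℕ → Bool))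
    (hm : ∀ (s : Finset ℕ) (f : ℕ → Bool),
      m {x | ∀ i ∈ s, x i = f i} = (2⁻¹ : ℝ≥0∞) ^ s.card) :
    IsUnifLocDoublingMeasure m := by
  refine ⟨⟨2, ?_⟩⟩
  filter_upwards [self_mem_nhdsWithin] with ε hε
  have hε' : (0:ℝ) < ε := hε
  intro x
  obtain ⟨n₂, h2eq, h2le, _⟩ := exists_closedBall_eq5 x (by linarith : (0:ℝ) < 2*ε)
  obtain ⟨n₁, h1eq, _, h1min⟩ := exists_closedBall_eq5 x hε'
  rw [h2eq, h1eq, meas_cylinder5 m hm, meas_cylinder5 m hm]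
  norm_cast
  have hn : n₁ ≤ n₂ + 1 := by
    apply h1min
    rw [pow_succ]
    nlinarith
  have hp : (2⁻¹:ℝ≥0∞) ^ (n₂+1) ≤ 2⁻¹ ^ n₁ :=
    pow_le_pow_of_le_one zero_le (by norm_num) hn
  calc (2⁻¹:ℝ≥0∞) ^ n₂ = 2 * (2⁻¹ ^ (n₂+1)) := by
        rw [pow_succ, mul_comm (2:ℝ≥0∞), mul_assoc,
          ENNReal.inv_mul_cancel (by norm_num) (by norm_num), mul_one]
    _ ≤ 2 * 2⁻¹ ^ n₁ := mul_le_mul_right hp 2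

/-- for the uniform measure m on Cantor space 2^ω (characterized by its
values on basic clopen cylinders) and a positive-measure Borel B ⊆ 2^ω × 2^ω, there
is a positive Borel A such that for every ε < 1 there is a positive Borel C with
(m₂ ‖ (A × C))(B) > ε. -/
theorem stmt5 (m : Measure (ℕ → Bool)) [IsProbabilityMeasure m]
    (hm : ∀ (s : Finset ℕ) (f : ℕ → Bool),
      m {x | ∀ i ∈ s, x i = f i} = (2⁻¹ : ℝ≥0∞) ^ s.card)
    (B : Set ((ℕ → Bool) × (ℕ → Bool))) (hB : MeasurableSet B)
    (hBpos : 0 < (m.prod m) B) :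
    ∃ A : Set (ℕ → Bool), MeasurableSet A ∧ 0 < m A ∧
      ∀ ε : ℝ≥0∞, ε < 1 → ∃ C : Set (ℕ → Bool), MeasurableSet C ∧ 0 < m C ∧
        ε < (m.prod m) (B ∩ A ×ˢ C) / (m.prod m) (A ×ˢ C) := by
  classical
  haveI hdb : IsUnifLocDoublingMeasure m := doubling5 m hm
  -- measurability of cylinders
  have hcylmeas : ∀ (y : ℕ → Bool) (j : ℕ), MeasurableSet (PiNat.cylinder y j) := by
    intro y j
    have hcyl : PiNat.cylinder y j
        = ⋂ i ∈ Finset.range j, (fun z : ℕ → Bool => z i) ⁻¹' {y i} := by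
      ext z
      simp [PiNat.mem_cylinder_iff, Finset.mem_range]
    rw [hcyl]
    exact MeasurableSet.biInter (Finset.range j).countable_toSet
      (fun i _ => measurable_pi_apply i (measurableSet_singleton (y i)))
  -- joint measurability of the numerators
  have hD : ∀ j : ℕ, MeasurableSet {q : ((ℕ → Bool) × (ℕ → Bool)) × (ℕ → Bool) |
      (q.1.1, q.2) ∈ B ∧ q.2 ∈ PiNat.cylinder q.1.2 j} := by
    intro j
    have h1 : MeasurableSet {q : ((ℕ → Bool) × (ℕ → Bool)) × (ℕ → Bool) | (q.1.1, q.2) ∈ B} :=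
      (measurable_fst.fst.prodMk measurable_snd) hB
    have h2 : MeasurableSet {q : ((ℕ → Bool) × (ℕ → Bool)) × (ℕ → Bool) |
        q.2 ∈ PiNat.cylinder q.1.2 j} := by
      have he : {q : ((ℕ → Bool) × (ℕ → Bool)) × (ℕ → Bool) | q.2 ∈ PiNat.cylinder q.1.2 j}
          = ⋂ i ∈ Finset.range j,
            (fun q : ((ℕ → Bool) × (ℕ → Bool)) × (ℕ → Bool) => (q.2 i, q.1.2 i))
              ⁻¹' {p : Bool × Bool | p.1 = p.2} := by
        ext q
        simp [PiNat.mem_cylinder_iff, Finset.mem_range]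
      rw [he]
      refine MeasurableSet.biInter (Finset.range j).countable_toSet (fun i _ => ?_)
      exact (((measurable_pi_apply i).comp measurable_snd).prodMk
        ((measurable_pi_apply i).comp (measurable_snd.comp measurable_fst)))
        ((Set.to_countable {p : Bool × Bool | p.1 = p.2}).measurableSet)
    exact h1.inter h2
  have hnum : ∀ j : ℕ, Measurable (fun z : (ℕ → Bool) × (ℕ → Bool) =>
      m (Prod.mk z.1 ⁻¹' B ∩ PiNat.cylinder z.2 j)) := by
    intro j
    exact measurable_measure_prodMk_left (hD j)
  have hg : ∀ j : ℕ, Measurable (fun z : (ℕ → Bool) × (ℕ → Bool) =>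
      m (Prod.mk z.1 ⁻¹' B ∩ PiNat.cylinder z.2 j) / (2⁻¹ : ℝ≥0∞) ^ j) :=
    fun j => (hnum j).div_const _
  set P : Set ((ℕ → Bool) × (ℕ → Bool)) :=
    {z | Tendsto (fun j : ℕ => m (Prod.mk z.1 ⁻¹' B ∩ PiNat.cylinder z.2 j) / (2⁻¹ : ℝ≥0∞) ^ j)
      atTop (𝓝 1)} with hPdef
  have hPmeas : MeasurableSet P := measurableSet_tendsto (𝓝 1) hg
  -- Step 1: slicewise density
  have hδ : Tendsto (fun j : ℕ => (1/2 : ℝ)^j) atTop (𝓝[>] (0:ℝ)) := by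
    apply tendsto_nhdsWithin_of_tendsto_nhds_of_eventually_within
    · exact tendsto_pow_atTop_nhds_zero_of_lt_one (by norm_num) (by norm_num)
    · exact Eventually.of_forall fun j => Set.mem_Ioi.mpr (by positivity)
  have hslice : ∀ x : ℕ → Bool, ∀ᵐ y ∂m, (x, y) ∈ B → (x, y) ∈ P := by
    intro x
    have hSm : MeasurableSet (Prod.mk x ⁻¹' B) := measurable_prodMk_left hB
    have hae := IsUnifLocDoublingMeasure.ae_tendsto_measure_inter_div m (Prod.mk x ⁻¹' B) 1
    rw [ae_restrict_iff' hSm] at hae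
    filter_upwards [hae] with y hy hyB
    have ht := hy hyB (fun _ : ℕ => y) (fun j : ℕ => (1/2 : ℝ)^j) hδ
      (Eventually.of_forall fun j => mem_closedBall_self (by positivity))
    simp only [hPdef, mem_setOf_eq]
    have heq : (fun j : ℕ => m (Prod.mk x ⁻¹' B ∩ PiNat.cylinder y j) / (2⁻¹ : ℝ≥0∞) ^ j)
        = fun j : ℕ => m (Prod.mk x ⁻¹' B ∩ closedBall y ((1/2 : ℝ)^j))
            / m (closedBall y ((1/2 : ℝ)^j)) := by
      funext j
      rw [closedBall_pow_eq5, meas_cylinder5 m hm]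
    rw [heq]
    exact ht
  -- Step 2: B \ P is null
  have hBP : (m.prod m) (B \ P) = 0 := by
    have hmeas : MeasurableSet (B \ P) := hB.diff hPmeas
    rw [Measure.prod_apply hmeas]
    have hz : ∀ x : ℕ → Bool, m (Prod.mk x ⁻¹' (B \ P)) = 0 := by
      intro x
      refine measure_mono_null ?_ (ae_iff.mp (hslice x))
      intro y hy
      simp only [mem_preimage, mem_diff] at hy
      simp only [mem_setOf_eq, Classical.not_imp]
      exact hy
    calc ∫⁻ x, m (Prod.mk x ⁻¹' (B \ P)) ∂m = ∫⁻ _, 0 ∂m := lintegral_congr hz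
      _ = 0 := lintegral_zero
  -- Step 2': swap
  have hswap : ∀ᵐ y ∂m, m ((fun x => (x, y)) ⁻¹' (B \ P)) = 0 := by
    have hmeas : MeasurableSet (B \ P) := hB.diff hPmeas
    have hs := Measure.prod_apply_symm (μ := m) (ν := m) hmeas
    rw [hBP, eq_comm, lintegral_eq_zero_iff (measurable_measure_prodMk_right hmeas)] at hs
    filter_upwards [hs] with y hy using hy
  -- Step 3: frequently positive slice
  have hfreq : ∃ᵐ y ∂m, m ((fun x => (x, y)) ⁻¹' B) ≠ 0 := by
    by_contra hcon
    rw [Filter.not_frequently] at hcon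
    simp only [not_not] at hcon
    have h0 : (m.prod m) B = 0 := by
      rw [Measure.prod_apply_symm hB]
      exact (lintegral_eq_zero_iff (measurable_measure_prodMk_right hB)).mpr hcon
    exact absurd h0 hBpos.ne'
  obtain ⟨y₀, hy₀pos, hy₀null⟩ := (hfreq.and_eventually hswap).exists
  -- Step 4: define A
  set A : Set (ℕ → Bool) := (fun x => (x, y₀)) ⁻¹' B with hAdef
  have hA : MeasurableSet A := measurable_prodMk_right hB
  have hApos : 0 < m A := pos_iff_ne_zero.mpr hy₀pos
  have hAtop : m A ≠ ⊤ := measure_ne_top m A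
  refine ⟨A, hA, hApos, ?_⟩
  intro ε hε
  -- Step 5
  set q : ℕ → (ℕ → Bool) → ℝ≥0∞ :=
    fun j x => m (Prod.mk x ⁻¹' B ∩ PiNat.cylinder y₀ j) / (2⁻¹ : ℝ≥0∞) ^ j with hqdef
  have hqm : ∀ j, Measurable (q j) := fun j => (hg j).comp measurable_prodMk_right
  have hqle : ∀ j x, q j x ≤ 1 := by
    intro j x
    apply ENNReal.div_le_of_le_mul
    rw [one_mul]
    exact (measure_mono inter_subset_right).trans (meas_cylinder5 m hm y₀ j).le
  have hae2 : ∀ᵐ x ∂m, x ∈ A → (x, y₀) ∈ P := by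
    rw [ae_iff]
    apply measure_mono_null _ hy₀null
    intro x hx
    simp only [mem_setOf_eq, Classical.not_imp] at hx
    exact hx
  have hconv : ∀ᵐ x ∂m.restrict A, Tendsto (fun j => q j x) atTop (𝓝 1) := by
    rw [ae_restrict_iff' hA]
    filter_upwards [hae2] with x hx hxA
    exact hx hxA
  have hint : Tendsto (fun j => ∫⁻ x in A, q j x ∂m) atTop (𝓝 (m A)) := by
    have h1 : (∫⁻ _ in A, (1:ℝ≥0∞) ∂m) = m A := by
      rw [setLIntegral_one]
    have := tendsto_lintegral_of_dominated_convergence (μ := m.restrict A)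
      (F := fun j x => q j x) (f := fun _ => 1) (fun _ => 1)
      (fun j => hqm j) (fun j => Eventually.of_forall (fun x => hqle j x))
      (by rw [h1]; exact hAtop) hconv
    rwa [h1] at this
  have hlt : ε * m A < m A := by
    have := ENNReal.mul_lt_mul_left hApos.ne' hAtop hε
    rwa [one_mul] at this
  obtain ⟨j, hj⟩ := (hint.eventually (eventually_gt_nhds hlt)).exists
  have hc0 : ((2⁻¹ : ℝ≥0∞) ^ j) ≠ 0 := by
    simp [pow_ne_zero]
  have hct : ((2⁻¹ : ℝ≥0∞) ^ j) ≠ ⊤ := by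
    exact ENNReal.pow_ne_top (by norm_num)
  refine ⟨PiNat.cylinder y₀ j, hcylmeas y₀ j, ?_, ?_⟩
  · rw [meas_cylinder5 m hm]
    exact pos_iff_ne_zero.mpr hc0
  · have hnum_eq : (m.prod m) (B ∩ A ×ˢ PiNat.cylinder y₀ j)
        = (∫⁻ x in A, q j x ∂m) * (2⁻¹ : ℝ≥0∞) ^ j := by
      rw [Measure.prod_apply (hB.inter (hA.prod (hcylmeas y₀ j)))]
      have hsl : ∀ x, m (Prod.mk x ⁻¹' (B ∩ A ×ˢ PiNat.cylinder y₀ j))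
          = A.indicator (fun x => m (Prod.mk x ⁻¹' B ∩ PiNat.cylinder y₀ j)) x := by
        intro x
        by_cases hx : x ∈ A
        · rw [indicator_of_mem hx]
          congr 1
          ext y'
          simp [hx]
        · rw [indicator_of_notMem hx]
          have hempty : Prod.mk x ⁻¹' (B ∩ A ×ˢ PiNat.cylinder y₀ j) = ∅ := by
            ext y'
            simp [hx]
          rw [hempty, measure_empty]
      rw [lintegral_congr hsl, lintegral_indicator hA, ← lintegral_mul_const _ (hqm j)]
      exact lintegral_congr fun x => (ENNReal.div_mul_cancel hc0 hct).symm
    have hden : (m.prod m) (A ×ˢ PiNat.cylinder y₀ j) = m A * (2⁻¹ : ℝ≥0∞) ^ j := by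
      rw [Measure.prod_prod, meas_cylinder5 m hm]
    rw [hnum_eq, hden, ENNReal.mul_div_mul_right _ _ hc0 hct,
      ENNReal.lt_div_iff_mul_lt (Or.inl hApos.ne') (Or.inl hAtop)]
    exact hj
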